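/- Let D be a digraph and X, Y vertex sets with X joinable to Y. Suppose X' ⊆ X with X\X' finite, Y' ⊆ Y, and X' is joinable to Y'. Then there is a set Y'' ⊆ Y such that X is joinable to Y'' and |Y''\Y'| ≤ |X\X'|. -/

import Mathlib

/-!  Common framework: digraphs as edge sets on a vertex type, directed paths,
path-systems, separations, flames and largeness. -/

universe u

variable {V : Type u}

/-- A directed path in the digraph on `V` with edge set `E`, given by its
(nonempty, repetition-free) list of vertices `start :: rest`. -/
structure Dipath (E : Set (V × V)) : Type u where
  start : V
  rest : List V
  chain : List.Chain (fun a b => (a, b) ∈ E) start rest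
  nodup : (start :: rest).Nodup

namespace Dipath

variable {E : Set (V × V)}

/-- The list of vertices of the path. -/
def verts (p : Dipath E) : List V := p.start :: p.rest

/-- The terminal vertex of the path. -/
def last (p : Dipath E) : V := (p.start :: p.rest).getLast (List.cons_ne_nil _ _)

/-- The set of vertices of the path. -/
def support (p : Dipath E) : Set V := {v | v ∈ p.verts}

/-- The internal vertices of the path (all vertices except the first and the last). -/
def internal (p : Dipath E) : Set V := {v | v ∈ p.rest.dropLast}

/-- The list of (directed) edges of the path. -/
def edges (p : Dipath E) : List (V × V) := p.verts.zip p.rest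

/-- The set of edges of the path. -/
def edgeSet (p : Dipath E) : Set (V × V) := {e | e ∈ p.edges}

/-- The last edge of the path, if the path has at least one edge. -/
def lastEdge? (p : Dipath E) : Option (V × V) := p.edges.getLast?

end Dipath

section Defs

variable (E : Set (V × V))

/-- The set of ingoing edges of `v`. -/
def inEdges (v : V) : Set (V × V) := {e ∈ E | e.2 = v}

/-- The set of initial vertices of a set of paths. -/
def initVerts {E : Set (V × V)} (P : Set (Dipath E)) : Set V := Dipath.start '' P

/-- The set of terminal vertices of a set of paths. -/
def termVerts {E : Set (V × V)} (P : Set (Dipath E)) : Set V := Dipath.last '' P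

/-- The set of terminal edges of a set of paths. -/
def termEdges {E : Set (V × V)} (P : Set (Dipath E)) : Set (V × V) :=
  {e | ∃ p ∈ P, p.lastEdge? = some e}

/-- An `(r,v)`-path-system: a set of pairwise internally disjoint directed
paths from `r` to `v`. -/
def IsRVSystem (r v : V) (P : Set (Dipath E)) : Prop :=
  (∀ p ∈ P, p.start = r ∧ p.last = v) ∧
    P.Pairwise fun p q => p.support ∩ q.support ⊆ {r, v}

/-- An `(r,v)`-separation: a set of vertices avoiding `r` and `v` and meeting
every directed path from `r` to `v`. -/
def IsSeparation (r v : V) (S : Set V) : Prop :=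
  r ∉ S ∧ v ∉ S ∧ ∀ p : Dipath E, p.start = r → p.last = v → (p.support ∩ S).Nonempty

/-- A set of paths `P` and a vertex set `S` are orthogonal:  every path of `P`
meets `S` in exactly one vertex and every vertex of `S` lies on a path of `P`. -/
def Orthogonal {E : Set (V × V)} (P : Set (Dipath E)) (S : Set V) : Prop :=
  (∀ p ∈ P, ∃! x, x ∈ p.support ∩ S) ∧ ∀ x ∈ S, ∃ p ∈ P, x ∈ p.support

/-- An Erdős–Menger `(r,v)`-path-system: one orthogonal to some `(r,v)`-separation. -/
def IsEMSystem (r v : V) (P : Set (Dipath E)) : Prop :=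
  IsRVSystem E r v P ∧ ∃ S, IsSeparation E r v S ∧ Orthogonal P S

/-- An Erdős–Menger `(r,v)`-separation: one orthogonal to some `(r,v)`-path-system. -/
def IsEMSeparation (r v : V) (S : Set V) : Prop :=
  IsSeparation E r v S ∧ ∃ P : Set (Dipath E), IsRVSystem E r v P ∧ Orthogonal P S

/-- `𝒢_E(v)` (with root `r`): the collection of edge sets `I` that arise as the set of
terminal edges of an internally disjoint `(r,v)`-path-system in `E`. -/
def GSet (r v : V) : Set (Set (V × V)) :=
  {I | ∃ P : Set (Dipath E), IsRVSystem E r v P ∧ termEdges P = I}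

/-- A vertex-flame (with root `r`): for every `v ≠ r`, the whole in-edge set of `v`
is the terminal edge set of an internally disjoint `(r,v)`-path-system. -/
def IsFlame (r : V) : Prop := ∀ v, v ≠ r → inEdges E v ∈ GSet E r v

/-- `L` is `v`-large with respect to the digraph `E` rooted at `r`: `L` contains `rv`
whenever `E` does, and some Erdős–Menger `(r,v)`-path-system of `E - rv` lies in `L`. -/
def VLarge (r : V) (L : Set (V × V)) (v : V) : Prop :=
  ((r, v) ∈ E → (r, v) ∈ L) ∧
    ∃ P : Set (Dipath (E \ {(r, v)})),
      IsEMSystem (E \ {(r, v)}) r v P ∧ ∀ p ∈ P, p.edgeSet ⊆ L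

/-- `L` is large with respect to the digraph `E` rooted at `r`. -/
def Large (r : V) (L : Set (V × V)) : Prop := ∀ v, v ≠ r → VLarge E r L v

/-- An `(X,Y)`-path: from `X` to `Y`, internally disjoint from `X ∪ Y`. -/
def IsXYPath (X Y : Set V) (p : Dipath E) : Prop :=
  p.start ∈ X ∧ p.last ∈ Y ∧ ∀ w ∈ p.internal, w ∉ X ∪ Y

/-- An `(X,Y)`-path-system: pairwise disjoint `(X,Y)`-paths. -/
def IsXYSystem (X Y : Set V) (P : Set (Dipath E)) : Prop :=
  (∀ p ∈ P, IsXYPath E X Y p) ∧ P.Pairwise fun p q => Disjoint p.support q.support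

/-- `X` is joinable to `Y`: some `(X,Y)`-path-system covers `X` with its initial vertices. -/
def Joinable (X Y : Set V) : Prop :=
  ∃ P : Set (Dipath E), IsXYSystem E X Y P ∧ initVerts P = X

/-- `X` is incompressible to `Y`: `X` is joinable to `Y` and every witnessing
path-system covers `Y` with its terminal vertices. -/
def Incompressible (X Y : Set V) : Prop :=
  Joinable E X Y ∧
    ∀ P : Set (Dipath E), IsXYSystem E X Y P → initVerts P = X → termVerts P = Y

/-- An `(X,Y)`-separation: a vertex set meeting every `(X,Y)`-path. -/
def IsXYSeparation (X Y : Set V) (S : Set V) : Prop :=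
  ∀ p : Dipath E, IsXYPath E X Y p → (p.support ∩ S).Nonempty

/-- An Erdős–Menger `(X,Y)`-separation: one orthogonal to some `(X,Y)`-path-system. -/
def IsEMXYSeparation (X Y : Set V) (S : Set V) : Prop :=
  IsXYSeparation E X Y S ∧ ∃ P : Set (Dipath E), IsXYSystem E X Y P ∧ Orthogonal P S

/-- `X'` is `(X,Y)`-finitely extendable: every `O` with `X' ⊆ O ⊆ X` and `O \ X'`
finite is joinable to `Y`. -/
def FinExtendable (X Y X' : Set V) : Prop :=
  X' ⊆ X ∧ ∀ O, X' ⊆ O → O ⊆ X → (O \ X').Finite → Joinable E O Y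

/-- `S` separates the vertex `y` from `r`:  every directed path from `r` to `y` meets `S`. -/
def SeparatesFrom (r : V) (S : Set V) (y : V) : Prop :=
  ∀ p : Dipath E, p.start = r → p.last = y → (p.support ∩ S).Nonempty

/-- An `(X,y)`-path: from a vertex of `X` to `y`, internally disjoint from `X`. -/
def IsXyPath (X : Set V) (y : V) (p : Dipath E) : Prop :=
  p.start ∈ X ∧ p.last = y ∧ ∀ w ∈ p.internal, w ∉ X

/-- An `(X,y)`-path-system: `(X,y)`-paths, pairwise disjoint except possibly at `y`. -/
def IsXySystem (X : Set V) (y : V) (P : Set (Dipath E)) : Prop :=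
  (∀ p ∈ P, IsXyPath E X y p) ∧ P.Pairwise fun p q => p.support ∩ q.support ⊆ {y}

/-- An `(r,S)`-path: from `r` to a vertex of `S`, internally disjoint from `S`. -/
def IsRSPath (r : V) (S : Set V) (p : Dipath E) : Prop :=
  p.start = r ∧ p.last ∈ S ∧ ∀ w ∈ p.internal, w ∉ S

/-- An `(r,S)`-path-system: `(r,S)`-paths, pairwise disjoint apart from `r`. -/
def IsRSSystem (r : V) (S : Set V) (P : Set (Dipath E)) : Prop :=
  (∀ p ∈ P, IsRSPath E r S p) ∧ P.Pairwise fun p q => p.support ∩ q.support ⊆ {r}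

/-- `E` is a `G`-quasi-flame (with root `r`): for every `v ≠ r`, every set `I` of
ingoing edges of `v` with `I \ inEdges G v` finite lies in `𝒢_E(v)`. -/
def QuasiFlame (r : V) (G : Set (V × V)) : Prop :=
  ∀ v, v ≠ r → ∀ I, I ⊆ inEdges E v → (I \ inEdges G v).Finite → I ∈ GSet E r v

/-- The local connectivity `κ_E(r,v)`: the maximum size of an internally disjoint
`(r,v)`-path-system. -/
noncomputable def kappa (r v : V) : ℕ :=
  sSup {n | ∃ P : Set (Dipath E), IsRVSystem E r v P ∧ P.Finite ∧ P.ncard = n}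

end Defs
attribute [local instance] Classical.propDecidable

variable {V : Type u}

namespace Dipath
variable {E : Set (V × V)}

theorem verts_ne_nil (p : Dipath E) : p.verts ≠ [] := List.cons_ne_nil _ _

theorem length_pos (p : Dipath E) : 0 < p.verts.length := by
  simp [Dipath.verts]

theorem verts_zero (p : Dipath E) : p.verts[0]'p.length_pos = p.start := rfl

theorem last_eq_getElem (p : Dipath E) :
    p.last = p.verts[p.verts.length - 1]'(by have := p.length_pos; omega) := by
  have : p.last = p.verts.getLast p.verts_ne_nil := rfl
  rw [this, List.getLast_eq_getElem]

theorem chain' (p : Dipath E) : List.Chain' (fun a b => (a, b) ∈ E) p.verts := p.chain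

theorem adj (p : Dipath E) {k : ℕ} (h : k + 1 < p.verts.length) :
    (p.verts[k]'(by omega), p.verts[k+1]'h) ∈ E := by
  have := List.isChain_iff_getElem.mp p.chain' k (by omega)
  simpa using this

theorem start_mem (p : Dipath E) : p.start ∈ p.verts := by
  simp [Dipath.verts]

theorem last_mem (p : Dipath E) : p.last ∈ p.verts := by
  exact List.getLast_mem (l := p.verts) p.verts_ne_nil

theorem mem_support_iff (p : Dipath E) (v : V) : v ∈ p.support ↔ v ∈ p.verts := Iff.rfl

end Dipath
namespace Dipath
variable {E : Set (V × V)} {X Y : Set V}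

/-- In a digraph where `X` has no ingoing edges, only position 0 can be in `X`. -/
theorem pos_eq_zero_of_mem_X (hX : ∀ e ∈ E, e.2 ∉ X) (p : Dipath E) {k : ℕ}
    (hk : k < p.verts.length) (hmem : p.verts[k] ∈ X) : k = 0 := by
  by_contra h
  obtain ⟨k, rfl⟩ : ∃ m, k = m + 1 := ⟨k - 1, by omega⟩
  exact hX _ (p.adj hk) hmem

theorem pos_eq_last_of_mem_Y (hY : ∀ e ∈ E, e.1 ∉ Y) (p : Dipath E) {k : ℕ}
    (hk : k < p.verts.length) (hmem : p.verts[k] ∈ Y) : k = p.verts.length - 1 := by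
  by_contra h
  exact hY _ (p.adj (k := k) (by omega)) hmem

theorem eq_start_of_mem_X (hX : ∀ e ∈ E, e.2 ∉ X) (p : Dipath E) {v : V}
    (hv : v ∈ p.verts) (hmem : v ∈ X) : v = p.start := by
  obtain ⟨k, hk, rfl⟩ := List.mem_iff_getElem.mp hv
  have := p.pos_eq_zero_of_mem_X hX hk hmem
  subst this; exact p.verts_zero

theorem eq_last_of_mem_Y (hY : ∀ e ∈ E, e.1 ∉ Y) (p : Dipath E) {v : V}
    (hv : v ∈ p.verts) (hmem : v ∈ Y) : v = p.last := by
  obtain ⟨k, hk, rfl⟩ := List.mem_iff_getElem.mp hv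
  have hkl := p.pos_eq_last_of_mem_Y hY hk hmem
  rw [p.last_eq_getElem]
  congr 1

/-- Internal vertices of any path avoid `X` and `Y`. -/
theorem internal_not_mem (hX : ∀ e ∈ E, e.2 ∉ X) (hY : ∀ e ∈ E, e.1 ∉ Y)
    (p : Dipath E) {v : V} (hv : v ∈ p.internal) : v ∉ X ∪ Y := by
  have hv' : v ∈ p.rest.dropLast := hv
  have hrest : v ∈ p.rest := (List.dropLast_sublist _).mem hv'
  have hdl : v ∈ p.verts.dropLast := by
    rcases p.rest.eq_nil_or_concat with h | ⟨l, b, h⟩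
    · simp [h] at hv'
    · have : p.verts.dropLast = p.start :: p.rest.dropLast := by
        show (p.start :: p.rest).dropLast = _
        rw [h, List.concat_eq_append, ← List.cons_append, List.dropLast_concat,
          List.dropLast_concat]
      rw [this]; exact List.mem_cons_of_mem _ hv'
  -- v is at a position ≥ 1 (it is in rest)
  rintro (hX' | hY')
  · obtain ⟨k, hk, hkv⟩ := List.mem_iff_getElem.mp hrest
    have : p.verts[k+1]'(by simpa [Dipath.verts] using Nat.succ_lt_succ hk) = v := by
      simpa [Dipath.verts] using hkv
    have h0 := p.pos_eq_zero_of_mem_X hX (k := k + 1)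
      (by simpa [Dipath.verts] using Nat.succ_lt_succ hk) (this ▸ hX')
    omega
  · obtain ⟨k, hk, hkv⟩ := List.mem_iff_getElem.mp hdl
    have hklt : k < p.verts.length - 1 := by
      simpa [List.length_dropLast] using hk
    have hkv' : p.verts[k]'(by omega) = v := by
      rw [← hkv]; exact (List.getElem_dropLast hk).symm
    have := p.pos_eq_last_of_mem_Y hY (k := k) (by omega) (hkv' ▸ hY')
    omega

end Dipath
theorem List.getLast?_take_of_lt {V : Type u} (l : List V) {i : ℕ} (h : i < l.length) :
    (l.take (i+1)).getLast? = some (l[i]) := by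
  rw [List.getLast?_eq_getElem?, List.length_take]
  have h1 : (i+1) ⊓ l.length = i + 1 := Nat.min_eq_left (by omega)
  rw [h1, Nat.add_sub_cancel, List.getElem?_take, if_pos (Nat.lt_succ_self i),
    List.getElem?_eq_getElem h]

namespace Dipath
variable {E : Set (V × V)}

theorem getLast?_verts (p : Dipath E) : p.verts.getLast? = some p.last := by
  rw [List.getLast?_eq_getLast p.verts_ne_nil]; rfl

/-- Splice: prefix of `p` up to index `i`, followed by the part of `q` strictly
after index `j` (junk value `p` if the result is not a path). -/
noncomputable def splice (p q : Dipath E) (i j : ℕ) : Dipath E :=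
  if h : List.Chain (fun a b => (a, b) ∈ E) p.start (p.rest.take i ++ q.verts.drop (j + 1)) ∧
      (p.start :: (p.rest.take i ++ q.verts.drop (j + 1))).Nodup then
    ⟨p.start, p.rest.take i ++ q.verts.drop (j + 1), h.1, h.2⟩
  else p

theorem splice_start (p q : Dipath E) (i j : ℕ) : (splice p q i j).start = p.start := by
  unfold splice; split <;> rfl

theorem take_verts (p : Dipath E) (i : ℕ) :
    p.verts.take (i + 1) = p.start :: p.rest.take i := List.take_succ_cons

theorem splice_verts (p q : Dipath E) {i j : ℕ} (hi : i < p.verts.length)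
    (hj : j < q.verts.length) (hij : p.verts[i] = q.verts[j])
    (hdisj : ∀ v ∈ p.verts.take (i + 1), v ∉ q.verts.drop (j + 1)) :
    (splice p q i j).verts = p.verts.take (i + 1) ++ q.verts.drop (j + 1) := by
  have hchain : List.Chain' (fun a b => (a, b) ∈ E)
      (p.verts.take (i+1) ++ q.verts.drop (j+1)) := by
    refine (p.chain'.take (i+1)).append (q.chain'.drop (j+1)) ?_
    intro a ha b hb
    rw [List.getLast?_take_of_lt _ hi] at ha
    rw [List.head?_drop] at hb
    by_cases hlt : j + 1 < q.verts.length
    · rw [List.getElem?_eq_getElem hlt] at hb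
      simp only [Option.mem_def, Option.some.injEq] at ha hb
      subst ha; subst hb
      rw [hij]
      exact q.adj hlt
    · rw [List.getElem?_eq_none (by omega)] at hb
      simp at hb
  have hnodup : (p.verts.take (i+1) ++ q.verts.drop (j+1)).Nodup := by
    rw [List.nodup_append]
    exact ⟨(List.take_sublist _ _).nodup p.nodup, (List.drop_sublist _ _).nodup q.nodup,
      fun a ha b hb hab => hdisj a ha (hab ▸ hb)⟩
  rw [take_verts] at hchain hnodup ⊢
  unfold splice
  rw [dif_pos ⟨hchain, hnodup⟩]
  rfl

theorem splice_last (p q : Dipath E) {i j : ℕ} (hi : i < p.verts.length)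
    (hj : j < q.verts.length) (hij : p.verts[i] = q.verts[j])
    (hdisj : ∀ v ∈ p.verts.take (i + 1), v ∉ q.verts.drop (j + 1)) :
    (splice p q i j).last = q.last := by
  have hv := splice_verts p q hi hj hij hdisj
  have h1 := (splice p q i j).getLast?_verts
  rw [hv, List.getLast?_append, List.getLast?_drop] at h1
  by_cases hc : j + 1 < q.verts.length
  · rw [if_neg (by omega), q.getLast?_verts] at h1
    rw [show ((some q.last).or (p.verts.take (i+1)).getLast? = some q.last) from rfl] at h1
    exact (Option.some_injective _ h1).symm
  · rw [if_pos (by omega), Option.none_or, List.getLast?_take_of_lt _ hi] at h1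
    have : p.verts[i] = q.last := by
      rw [hij, q.last_eq_getElem]
      congr 1
      omega
    rw [this] at h1
    exact (Option.some_injective _ h1).symm

theorem splice_mem (p q : Dipath E) {i j : ℕ} (hi : i < p.verts.length)
    (hj : j < q.verts.length) (hij : p.verts[i] = q.verts[j])
    (hdisj : ∀ v ∈ p.verts.take (i + 1), v ∉ q.verts.drop (j + 1)) (v : V) :
    v ∈ (splice p q i j).verts ↔
      v ∈ p.verts.take (i + 1) ∨ v ∈ q.verts.drop (j + 1) := by
  rw [splice_verts p q hi hj hij hdisj, List.mem_append]

end Dipath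
/-! ## The augmentation machine -/

/-- State of the augmentation process. -/
structure AugSt (V : Type u) where
  own : V → Option (ℕ × ℕ × V)
  cut : V → ℕ
  ptr : V → ℕ
  debt : Option V
  exh : Option V

section Machine

variable {E : Set (V × V)} (a b : V → Dipath E) (X' : Set V) (x : V)

/-- The set of vertices currently occupied by `B`-suffixes. -/
def hitSet (σ : AugSt V) : Set V :=
  {v | ∃ q ∈ X', ∃ k, ∃ _ : k < (b q).verts.length, σ.cut q ≤ k ∧ (b q).verts[k] = v}

/-- `q`'s `B`-path has been (partially) stolen. -/
def touched (σ : AugSt V) (q : V) : Prop := ∃ z i j, σ.own z = some (i, j, q)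

/-- The initial state. -/
def augInit : AugSt V := ⟨fun _ => none, fun _ => 0, fun _ => 0, some x, none⟩

/-- The step relation of the augmentation process. -/
inductive StepRel : AugSt V → AugSt V → Prop
  | idle (σ : AugSt V) (h : σ.debt = none) : StepRel σ σ
  | exhaust (σ : AugSt V) (z : V) (h : σ.debt = some z)
      (hclean : ∀ k, ∀ _ : k < (a z).verts.length, (a z).verts[k] ∉ hitSet b X' σ) :
      StepRel σ ⟨σ.own, σ.cut, σ.ptr, none, some z⟩
  | steal (σ : AugSt V) (z : V) (i j : ℕ) (q : V) (d : V)
      (h : σ.debt = some z)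
      (hi : i < (a z).verts.length)
      (hq : q ∈ X')
      (hj : j < (b q).verts.length)
      (hcut : σ.cut q ≤ j)
      (hij : (a z).verts[i] = (b q).verts[j])
      (hmin : ∀ k < i, ∀ _ : k < (a z).verts.length, (a z).verts[k] ∉ hitSet b X' σ)
      (hd : (∃ i₀ j₀, σ.own d = some (i₀, j₀, q)) ∨ (¬ touched σ q ∧ d = q)) :
      StepRel σ ⟨Function.update
          (fun w => if ∃ i' j', σ.own w = some (i', j', q) then none else σ.own w)
          z (some (i, j, q)),
        Function.update σ.cut q j, Function.update σ.ptr z (i + 1), some d, none⟩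

/-- The invariant of the augmentation process. -/
structure AugInv (σ : AugSt V) : Prop where
  ownq : ∀ z i j q, σ.own z = some (i, j, q) →
    q ∈ X' ∧ z ∈ insert x X' ∧
      ∃ (hi : i < (a z).verts.length) (hj : j < (b q).verts.length),
        1 ≤ j ∧ (a z).verts[i] = (b q).verts[j] ∧ σ.cut q = j ∧ σ.ptr z = i + 1
  ownUnique : ∀ z z' i j i' j' q, σ.own z = some (i, j, q) → σ.own z' = some (i', j', q) →
    z = z'
  cutUntouched : ∀ q, ¬ touched σ q → σ.cut q = 0
  ownClean : ∀ z i j q, σ.own z = some (i, j, q) →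
    ∀ k < i, ∀ _ : k < (a z).verts.length, (a z).verts[k] ∉ hitSet b X' σ
  ptrClean : ∀ z, σ.own z = none →
    ∀ k < σ.ptr z, ∀ _ : k < (a z).verts.length, (a z).verts[k] ∉ hitSet b X' σ
  debtInv : ∀ z, σ.debt = some z →
    σ.own z = none ∧ z ∈ insert x X' ∧ σ.exh = none ∧ (z = x ∨ touched σ z)
  exhInv : ∀ z, σ.exh = some z →
    σ.debt = none ∧ σ.own z = none ∧ z ∈ insert x X' ∧
      (∀ k, ∀ _ : k < (a z).verts.length, (a z).verts[k] ∉ hitSet b X' σ) ∧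
      (z = x ∨ touched σ z)
  activeInv : ∀ z, σ.own z ≠ none → z = x ∨ touched σ z
  cover : ∀ z ∈ insert x X', σ.own z ≠ none ∨ σ.exh = some z ∨ σ.debt = some z ∨
    (z ∈ X' ∧ ¬ touched σ z)
  ptrBound : ∀ z, σ.ptr z ≤ (a z).verts.length

theorem augInit_inv (hx' : x ∉ X') : AugInv a b X' x (augInit x) := by
  refine ⟨?_, ?_, ?_, ?_, ?_, ?_, ?_, ?_, ?_, ?_⟩ <;>
    simp [augInit, touched]
  · intro z hz; exact Or.inr hz

end Machine
@[simp] theorem AugSt.mk_own {V : Type u} (f : V → Option (ℕ × ℕ × V)) (c p : V → ℕ)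
    (d e : Option V) : (AugSt.mk f c p d e).own = f := rfl
@[simp] theorem AugSt.mk_cut {V : Type u} (f : V → Option (ℕ × ℕ × V)) (c p : V → ℕ)
    (d e : Option V) : (AugSt.mk f c p d e).cut = c := rfl
@[simp] theorem AugSt.mk_ptr {V : Type u} (f : V → Option (ℕ × ℕ × V)) (c p : V → ℕ)
    (d e : Option V) : (AugSt.mk f c p d e).ptr = p := rfl
@[simp] theorem AugSt.mk_debt {V : Type u} (f : V → Option (ℕ × ℕ × V)) (c p : V → ℕ)
    (d e : Option V) : (AugSt.mk f c p d e).debt = d := rfl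
@[simp] theorem AugSt.mk_exh {V : Type u} (f : V → Option (ℕ × ℕ × V)) (c p : V → ℕ)
    (d e : Option V) : (AugSt.mk f c p d e).exh = e := rfl

section Machine2

variable {E : Set (V × V)} {a b : V → Dipath E} {X' : Set V} {x : V} {σ σ' : AugSt V}

theorem mem_hitSet_of {q : V} (hq : q ∈ X') {k : ℕ} (h : k < (b q).verts.length)
    (hc : σ.cut q ≤ k) : (b q).verts[k] ∈ hitSet b X' σ := ⟨q, hq, k, h, hc, rfl⟩

theorem StepRel.cut_mono (hst : StepRel a b X' σ σ') (q : V) : σ.cut q ≤ σ'.cut q := by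
  cases hst with
  | idle => exact le_rfl
  | exhaust => exact le_rfl
  | steal z i j q' d h hi hq hj hcut hij hmin hd =>
    simp only [AugSt.mk_cut]
    rcases eq_or_ne q q' with rfl | hne
    · rw [Function.update_self]; exact hcut
    · rw [Function.update_of_ne hne]

theorem StepRel.hitSet_anti (hst : StepRel a b X' σ σ') :
    hitSet b X' σ' ⊆ hitSet b X' σ := by
  rintro v ⟨q, hq, k, hk, hc, rfl⟩
  exact ⟨q, hq, k, hk, le_trans (hst.cut_mono q) hc, rfl⟩

theorem StepRel.idle_of_none (hst : StepRel a b X' σ σ') (h : σ.debt = none) : σ' = σ := by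
  cases hst with
  | idle => rfl
  | exhaust z h' hclean => rw [h] at h'; cases h'
  | steal z i j q d h' hi hq hj hcut hij hmin hd => rw [h] at h'; cases h'

theorem StepRel.exh_absorb (hst : StepRel a b X' σ σ') (hinv : AugInv a b X' x σ)
    {z : V} (h : σ.exh = some z) : σ' = σ :=
  hst.idle_of_none (hinv.exhInv z h).1

theorem StepRel.touched_mono (hst : StepRel a b X' σ σ') (hinv : AugInv a b X' x σ)
    {w : V} (ht : touched σ w) : touched σ' w := by
  cases hst with
  | idle => exact ht
  | exhaust => exact ht
  | steal z i j q d h hi hq hj hcut hij hmin hd =>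
    obtain ⟨z₁, i₁, j₁, hz₁⟩ := ht
    rcases eq_or_ne w q with rfl | hwq
    · exact ⟨z, i, j, by simp⟩
    · refine ⟨z₁, i₁, j₁, ?_⟩
      simp only [AugSt.mk_own]
      have hz₁z : z₁ ≠ z := by
        intro hzz
        rw [hzz, (hinv.debtInv z h).1] at hz₁; cases hz₁
      rw [Function.update_of_ne hz₁z, if_neg]
      · exact hz₁
      · rintro ⟨i', j', hz₁'⟩
        rw [hz₁] at hz₁'
        obtain ⟨h1, h2, h3⟩ : i₁ = i' ∧ j₁ = j' ∧ w = q := by simpa using hz₁'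
        exact hwq h3

theorem StepRel.ptr_mono (hst : StepRel a b X' σ σ') (hinv : AugInv a b X' x σ) (w : V) :
    σ.ptr w ≤ σ'.ptr w := by
  cases hst with
  | idle => exact le_rfl
  | exhaust => exact le_rfl
  | steal z i j q d h hi hq hj hcut hij hmin hd =>
    simp only [AugSt.mk_ptr]
    rcases eq_or_ne w z with rfl | hne
    · rw [Function.update_self]
      have hptr : σ.ptr w ≤ i := by
        by_contra hlt
        exact hinv.ptrClean w (hinv.debtInv w h).1 i (by omega) hi
          (hij ▸ mem_hitSet_of hq hj hcut)
      omega
    · rw [Function.update_of_ne hne]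

theorem StepRel.own_change (hst : StepRel a b X' σ σ') (hinv : AugInv a b X' x σ) (w : V)
    (hch : σ'.own w ≠ σ.own w) :
    (σ.debt = some w ∧ ∃ i j q, σ'.own w = some (i, j, q) ∧ σ.ptr w ≤ i ∧ σ'.ptr w = i + 1) ∨
      (σ'.own w = none ∧ σ'.debt = some w) := by
  cases hst with
  | idle => exact absurd rfl hch
  | exhaust => exact absurd rfl hch
  | steal z i j q d h hi hq hj hcut hij hmin hd =>
    simp only [AugSt.mk_own, AugSt.mk_ptr, AugSt.mk_debt] at hch ⊢
    rcases eq_or_ne w z with rfl | hne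
    · left
      refine ⟨h, i, j, q, by rw [Function.update_self], ?_, by rw [Function.update_self]⟩
      by_contra hlt
      exact hinv.ptrClean w (hinv.debtInv w h).1 i (by omega) hi
        (hij ▸ mem_hitSet_of hq hj hcut)
    · rw [Function.update_of_ne hne] at hch ⊢
      by_cases hex : ∃ i' j', σ.own w = some (i', j', q)
      · right
        rw [if_pos hex]
        refine ⟨rfl, ?_⟩
        obtain ⟨i', j', hw'⟩ := hex
        rcases hd with ⟨i₀, j₀, hd'⟩ | ⟨hnt, rfl⟩
        · rw [hinv.ownUnique w d i' j' i₀ j₀ q hw' hd']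
        · exact absurd ⟨w, i', j', hw'⟩ hnt
      · rw [if_neg hex] at hch
        exact absurd rfl hch

theorem StepRel.exh_value (hst : StepRel a b X' σ σ') {w : V} (h : σ'.exh = some w) :
    σ.exh = some w ∨ σ.debt = some w := by
  cases hst with
  | idle => exact Or.inl h
  | exhaust z hz hclean =>
    right
    simp only [AugSt.mk_exh] at h
    rw [← h]; exact hz
  | steal => cases h

end Machine2
/-- Hypothesis bundle for the augmentation argument. -/
structure AugHyp (E : Set (V × V)) (X Y X' W : Set V) (x : V) (a b : V → Dipath E) :
    Prop where
  hX : ∀ e ∈ E, e.2 ∉ X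
  hY : ∀ e ∈ E, e.1 ∉ Y
  hX'X : X' ⊆ X
  hWY : W ⊆ Y
  hxX : x ∈ X
  hxX' : x ∉ X'
  astart : ∀ z ∈ X, (a z).start = z
  alast : ∀ z ∈ X, (a z).last ∈ Y
  adisj : ∀ z ∈ X, ∀ z' ∈ X, z ≠ z' → ∀ v ∈ (a z).verts, v ∉ (a z').verts
  bstart : ∀ q ∈ X', (b q).start = q
  blast : ∀ q ∈ X', (b q).last ∈ W
  bdisj : ∀ q ∈ X', ∀ q' ∈ X', q ≠ q' → ∀ v ∈ (b q).verts, v ∉ (b q').verts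

namespace AugHyp

variable {E : Set (V × V)} {X Y X' W : Set V} {x : V} {a b : V → Dipath E}

theorem insert_sub (H : AugHyp E X Y X' W x a b) : insert x X' ⊆ X := by
  intro w hw
  rcases hw with rfl | hw
  · exact H.hxX
  · exact H.hX'X hw

/-- A vertex of `X` can occur in a `b`-path only at position `0` (i.e. it is its start). -/
theorem bpos (H : AugHyp E X Y X' W x a b) {q : V} (hq : q ∈ X') {k : ℕ} (hk : k < (b q).verts.length)
    (hmem : (b q).verts[k] ∈ X) : k = 0 :=
  (b q).pos_eq_zero_of_mem_X H.hX hk hmem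

theorem step_total (σ : AugSt V) : ∃ σ', StepRel a b X' σ σ' := by
  cases hdebt : σ.debt with
  | none => exact ⟨σ, .idle σ hdebt⟩
  | some z =>
    by_cases hh : ∃ k, ∃ _ : k < (a z).verts.length, (a z).verts[k] ∈ hitSet b X' σ
    · set i := Nat.find hh with hidef
      obtain ⟨hi, hmem⟩ := Nat.find_spec hh
      have hmin : ∀ k < i, ∀ _ : k < (a z).verts.length, (a z).verts[k] ∉ hitSet b X' σ :=
        fun k hk h hm => Nat.find_min hh hk ⟨h, hm⟩
      obtain ⟨q, hq, j, hj, hcut, heq⟩ := hmem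
      by_cases ht : touched σ q
      · obtain ⟨z₀, i₀, j₀, h₀⟩ := ht
        exact ⟨_, .steal σ z i j q z₀ hdebt hi hq hj hcut heq.symm hmin (Or.inl ⟨i₀, j₀, h₀⟩)⟩
      · exact ⟨_, .steal σ z i j q q hdebt hi hq hj hcut heq.symm hmin (Or.inr ⟨ht, rfl⟩)⟩
    · push_neg at hh
      exact ⟨_, .exhaust σ z hdebt fun k h => hh k h⟩

end AugHyp
namespace AugHyp

variable {E : Set (V × V)} {X Y X' W : Set V} {x : V} {a b : V → Dipath E} {σ σ' : AugSt V}

theorem steal_inv (H : AugHyp E X Y X' W x a b) (hinv : AugInv a b X' x σ)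
    (z : V) (i j : ℕ) (q d : V)
    (hz : σ.debt = some z)
    (hi : i < (a z).verts.length)
    (hq : q ∈ X')
    (hj : j < (b q).verts.length)
    (hcut : σ.cut q ≤ j)
    (hij : (a z).verts[i] = (b q).verts[j])
    (hmin : ∀ k < i, ∀ _ : k < (a z).verts.length, (a z).verts[k] ∉ hitSet b X' σ)
    (hd : (∃ i₀ j₀, σ.own d = some (i₀, j₀, q)) ∨ (¬ touched σ q ∧ d = q)) :
    AugInv a b X' x (⟨Function.update
        (fun w => if ∃ i' j', σ.own w = some (i', j', q) then none else σ.own w)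
        z (some (i, j, q)),
      Function.update σ.cut q j, Function.update σ.ptr z (i + 1), some d, none⟩ : AugSt V) := by
  set σ' : AugSt V := (⟨Function.update
        (fun w => if ∃ i' j', σ.own w = some (i', j', q) then none else σ.own w)
        z (some (i, j, q)),
      Function.update σ.cut q j, Function.update σ.ptr z (i + 1), some d, none⟩ : AugSt V)
    with hσ'
  have hst : StepRel a b X' σ σ' :=
    StepRel.steal σ z i j q d hz hi hq hj hcut hij hmin hd
  have hitSub := hst.hitSet_anti
  have htmono : ∀ {w : V}, touched σ w → touched σ' w :=
    fun {w} h => hst.touched_mono (x := x) hinv h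

  obtain ⟨hoz, hzm, hex0, hzt⟩ := hinv.debtInv z hz
  have hzX : z ∈ X := H.insert_sub hzm
  have hqX : q ∈ X := H.hX'X hq
  -- the hit cannot be at the start of `b q`
  have hj1 : 1 ≤ j := by
    by_contra hj0
    have hj0 : j = 0 := by omega
    subst hj0
    have hbq : (b q).verts[0]'hj = q := ((b q).verts_zero).trans (H.bstart q hq)
    have hiz : i = 0 := (a z).pos_eq_zero_of_mem_X H.hX hi (by rw [hij, hbq]; exact hqX)
    subst hiz
    have hzq : z = q := by
      have h1 : (a z).verts[0]'hi = z := ((a z).verts_zero).trans (H.astart z hzX)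
      rw [← h1, hij, hbq]
    have hzt' : touched σ z := by
      rcases hzt with rfl | ht
      · exact absurd (hzq ▸ hq) H.hxX'
      · exact ht
    obtain ⟨z₀, i₀, j₀, h₀⟩ := hzt'
    obtain ⟨-, -, -, -, hj₀1, -, hcutz, -⟩ := hinv.ownq z₀ i₀ j₀ z h₀
    rw [hzq] at hcutz
    omega
  -- any current owner of `q` had a strictly smaller cut
  have hstrict : ∀ w i₀ j₀, σ.own w = some (i₀, j₀, q) → j₀ < j := by
    intro w i₀ j₀ hw
    obtain ⟨-, hwm, hi₀, hj₀, -, hij₀, hcutq, -⟩ := hinv.ownq w i₀ j₀ q hw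
    have hwz : w ≠ z := by
      rintro rfl
      rw [hoz] at hw; cases hw
    rcases Nat.lt_or_ge j₀ j with h | h
    · exact h
    · exfalso
      have hje : j₀ = j := by omega
      subst hje
      have : (a w).verts[i₀] = (a z).verts[i] := by rw [hij₀, hij]
      exact H.adisj w (H.insert_sub hwm) z hzX hwz _ (List.getElem_mem _)
        (by rw [this]; exact List.getElem_mem _)
  -- freed positions of `b q` are no longer in the hit set
  have hfreed : ∀ k, k < j → ∀ _ : k < (b q).verts.length,
      (b q).verts[k] ∉ hitSet b X' σ' := by
    intro k hkj hk hmem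
    obtain ⟨q'', hq'', k'', hk'', hc'', he''⟩ := hmem
    have hqq : q = q'' := by
      by_contra hne
      exact H.bdisj q'' (hq'') q hq (fun hh => hne hh.symm) _ (List.getElem_mem _)
        (by rw [he'']; exact List.getElem_mem _)
    subst hqq
    have : k'' = k := (b q).nodup.getElem_inj_iff.mp he''
    subst this
    have : σ'.cut q = j := by
      simp only [hσ', AugSt.mk_cut, Function.update_self]
    omega
  -- ownership in the new state
  have hownz' : σ'.own z = some (i, j, q) := by
    simp only [hσ', AugSt.mk_own, Function.update_self]
  have hownw' : ∀ w, w ≠ z → σ'.own w =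
      if ∃ i' j', σ.own w = some (i', j', q) then none else σ.own w := by
    intro w hw
    simp only [hσ', AugSt.mk_own]
    rw [Function.update_of_ne hw]
  have hcutq' : σ'.cut q = j := by
    simp only [hσ', AugSt.mk_cut, Function.update_self]
  have hcutne : ∀ q'', q'' ≠ q → σ'.cut q'' = σ.cut q'' := by
    intro q'' h
    simp only [hσ', AugSt.mk_cut]
    rw [Function.update_of_ne h]
  have hptrz' : σ'.ptr z = i + 1 := by
    simp only [hσ', AugSt.mk_ptr, Function.update_self]
  have hptrne : ∀ w, w ≠ z → σ'.ptr w = σ.ptr w := by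
    intro w h
    simp only [hσ', AugSt.mk_ptr]
    rw [Function.update_of_ne h]
  have hdebt' : σ'.debt = some d := rfl
  have hexh' : σ'.exh = none := rfl
  -- `d` facts
  have hdfacts : (∃ i₀ j₀, σ.own d = some (i₀, j₀, q)) ∨
      (¬ touched σ q ∧ d = q ∧ σ.own q = none) := by
    rcases hd with h | ⟨hnt, rfl⟩
    · exact Or.inl h
    · refine Or.inr ⟨hnt, rfl, ?_⟩
      by_contra hne
      rcases hinv.activeInv d hne with rfl | ht
      · exact H.hxX' hq
      · exact hnt ht
  constructor
  -- ownq
  · intro w i' j' q'' hw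
    rcases eq_or_ne w z with rfl | hne
    · rw [hownz'] at hw
      obtain ⟨rfl, rfl, rfl⟩ : i = i' ∧ j = j' ∧ q = q'' := by simpa using hw
      exact ⟨hq, hzm, hi, hj, hj1, hij, hcutq', hptrz'⟩
    · rw [hownw' w hne] at hw
      by_cases hex : ∃ i'' j'', σ.own w = some (i'', j'', q)
      · rw [if_pos hex] at hw; cases hw
      · rw [if_neg hex] at hw
        obtain ⟨h1, h2, hi', hj', h3, h4, h5, h6⟩ := hinv.ownq w i' j' q'' hw
        have hqne : q'' ≠ q := by
          rintro rfl
          exact hex ⟨i', j', hw⟩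
        exact ⟨h1, h2, hi', hj', h3, h4, by rw [hcutne q'' hqne]; exact h5,
          by rw [hptrne w hne]; exact h6⟩
  -- ownUnique
  · intro w w' i' j' i'' j'' q'' hw hw'
    by_cases hne : w = z
    · by_cases hne' : w' = z
      · rw [hne, hne']
      · exfalso
        rw [hne, hownz'] at hw
        have hqq : q'' = q := by simpa using congrArg (fun o => o.map (·.2.2)) hw.symm
        rw [hownw' w' hne'] at hw'
        by_cases hex : ∃ i₀ j₀, σ.own w' = some (i₀, j₀, q)
        · rw [if_pos hex] at hw'; cases hw'
        · rw [if_neg hex] at hw'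
          exact hex ⟨i'', j'', hqq ▸ hw'⟩
    · by_cases hne' : w' = z
      · exfalso
        rw [hne', hownz'] at hw'
        have hqq : q'' = q := by simpa using congrArg (fun o => o.map (·.2.2)) hw'.symm
        rw [hownw' w hne] at hw
        by_cases hex : ∃ i₀ j₀, σ.own w = some (i₀, j₀, q)
        · rw [if_pos hex] at hw; cases hw
        · rw [if_neg hex] at hw
          exact hex ⟨i', j', hqq ▸ hw⟩
      · rw [hownw' w hne] at hw
        rw [hownw' w' hne'] at hw'
        by_cases hex : ∃ i₀ j₀, σ.own w = some (i₀, j₀, q)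
        · rw [if_pos hex] at hw; cases hw
        · rw [if_neg hex] at hw
          by_cases hex' : ∃ i₀ j₀, σ.own w' = some (i₀, j₀, q)
          · rw [if_pos hex'] at hw'; cases hw'
          · rw [if_neg hex'] at hw'
            exact hinv.ownUnique w w' i' j' i'' j'' q'' hw hw'
  -- cutUntouched
  · intro q'' hnt
    have hqne : q'' ≠ q := by
      rintro rfl
      exact hnt ⟨z, i, j, hownz'⟩
    rw [hcutne q'' hqne]
    refine hinv.cutUntouched q'' ?_
    rintro ⟨w, i', j', hw⟩
    refine hnt ⟨w, i', j', ?_⟩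
    have hwz : w ≠ z := by
      rintro rfl
      rw [hoz] at hw; cases hw
    rw [hownw' w hwz, if_neg]
    · exact hw
    · rintro ⟨i₀, j₀, hw₀⟩
      rw [hw] at hw₀
      have : q'' = q := by simpa using congrArg (fun o => o.map (·.2.2)) hw₀
      exact hqne this
  -- ownClean
  · intro w i' j' q'' hw k hk hk'
    rcases eq_or_ne w z with rfl | hne
    · rw [hownz'] at hw
      obtain ⟨rfl, rfl, rfl⟩ : i = i' ∧ j = j' ∧ q = q'' := by simpa using hw
      exact fun hm => hmin k hk hk' (hitSub hm)
    · rw [hownw' w hne] at hw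
      by_cases hex : ∃ i₀ j₀, σ.own w = some (i₀, j₀, q)
      · rw [if_pos hex] at hw; cases hw
      · rw [if_neg hex] at hw
        exact fun hm => hinv.ownClean w i' j' q'' hw k hk hk' (hitSub hm)
  -- ptrClean
  · intro w hw k hk hk'
    rcases eq_or_ne w z with rfl | hne
    · rw [hownz'] at hw; cases hw
    · rw [hownw' w hne] at hw
      rw [hptrne w hne] at hk
      by_cases hex : ∃ i₀ j₀, σ.own w = some (i₀, j₀, q)
      · obtain ⟨i₀, j₀, h₀⟩ := hex
        obtain ⟨-, -, hi₀, hj₀, -, hij₀, -, hptr₀⟩ := hinv.ownq w i₀ j₀ q h₀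
        rw [hptr₀] at hk
        rcases Nat.lt_or_ge k i₀ with hki | hki
        · exact fun hm => hinv.ownClean w i₀ j₀ q h₀ k hki hk' (hitSub hm)
        · have : k = i₀ := by omega
          subst this
          have : (a w).verts[k] = (b q).verts[j₀]'hj₀ := hij₀
          rw [this]
          exact hfreed j₀ (hstrict w k j₀ h₀) hj₀
      · rw [if_neg hex] at hw
        exact fun hm => hinv.ptrClean w hw k hk hk' (hitSub hm)
  -- debtInv
  · intro w hw
    rw [hdebt'] at hw
    injection hw with hw
    rw [← hw]
    rcases hdfacts with ⟨i₀, j₀, h₀⟩ | ⟨hnt, hdq, hqo⟩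
    · have hwz : d ≠ z := by
        intro hh
        rw [hh, hoz] at h₀; cases h₀
      obtain ⟨-, hwm, -⟩ := hinv.ownq d i₀ j₀ q h₀
      refine ⟨?_, hwm, hexh', ?_⟩
      · rw [hownw' d hwz, if_pos ⟨i₀, j₀, h₀⟩]
      · rcases hinv.activeInv d (by rw [h₀]; simp) with h | h
        · exact Or.inl h
        · exact Or.inr (htmono h)
    · have hwz : d ≠ z := by
        intro hh
        rcases hzt with hzx | ht
        · rw [hdq] at hh; rw [hh, hzx] at hq; exact H.hxX' hq
        · rw [hdq] at hh; rw [← hh] at ht; exact hnt ht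
      refine ⟨?_, Or.inr (hdq ▸ hq), hexh', Or.inr ⟨z, i, j, hdq ▸ hownz'⟩⟩
      rw [hownw' d hwz, if_neg, hdq, hqo]
      rintro ⟨i₀, j₀, h₀⟩
      rw [hdq, hqo] at h₀; cases h₀
  -- exhInv
  · intro w hw
    rw [hexh'] at hw; cases hw
  -- activeInv
  · intro w hw
    rcases eq_or_ne w z with rfl | hne
    · rcases hzt with h | h
      · exact Or.inl h
      · exact Or.inr (htmono h)
    · rw [hownw' w hne] at hw
      by_cases hex : ∃ i₀ j₀, σ.own w = some (i₀, j₀, q)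
      · rw [if_pos hex] at hw; exact absurd rfl hw
      · rw [if_neg hex] at hw
        rcases hinv.activeInv w hw with h | h
        · exact Or.inl h
        · exact Or.inr (htmono h)
  -- cover
  · intro w hw
    rcases eq_or_ne w z with rfl | hne
    · left; rw [hownz']; simp
    · rcases hinv.cover w hw with h | h | h | h
      · by_cases hex : ∃ i₀ j₀, σ.own w = some (i₀, j₀, q)
        · obtain ⟨i₀, j₀, h₀⟩ := hex
          rcases hdfacts with ⟨i₁, j₁, h₁⟩ | ⟨hnt, rfl, hqo⟩
          · have : w = d := hinv.ownUnique w d i₀ j₀ i₁ j₁ q h₀ h₁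
            subst this
            exact Or.inr (Or.inr (Or.inl hdebt'))
          · exact absurd ⟨w, i₀, j₀, h₀⟩ hnt
        · left
          rw [hownw' w hne, if_neg hex]
          exact h
      · rw [hex0] at h; cases h
      · rw [hz] at h
        injection h with h
        exact absurd h.symm hne
      · obtain ⟨hwX', hnt⟩ := h
        rcases eq_or_ne w q with rfl | hwq
        · rcases hdfacts with ⟨i₁, j₁, h₁⟩ | ⟨-, rfl, -⟩
          · exact absurd ⟨d, i₁, j₁, h₁⟩ hnt
          · exact Or.inr (Or.inr (Or.inl hdebt'))
        · refine Or.inr (Or.inr (Or.inr ⟨hwX', ?_⟩))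
          rintro ⟨u, i', j', hu⟩
          rcases eq_or_ne u z with rfl | huz
          · rw [hownz'] at hu
            have : w = q := by simpa using congrArg (fun o => o.map (·.2.2)) hu.symm
            exact hwq this
          · rw [hownw' u huz] at hu
            by_cases hex : ∃ i₀ j₀, σ.own u = some (i₀, j₀, q)
            · rw [if_pos hex] at hu; cases hu
            · rw [if_neg hex] at hu
              exact hnt ⟨u, i', j', hu⟩
  -- ptrBound
  · intro w
    rcases eq_or_ne w z with rfl | hne
    · rw [hptrz']; omega
    · rw [hptrne w hne]; exact hinv.ptrBound w


theorem step_inv (H : AugHyp E X Y X' W x a b) (hinv : AugInv a b X' x σ)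
    (hst : StepRel a b X' σ σ') : AugInv a b X' x σ' := by
  have hitSub := hst.hitSet_anti
  have htmono : ∀ {w : V}, touched σ w → touched σ' w :=
    fun {w} h => hst.touched_mono (x := x) hinv h
  cases hst with
  | idle => exact hinv
  | exhaust z hz hclean =>
    obtain ⟨hoz, hzm, hex0, hzt⟩ := hinv.debtInv z hz
    refine ⟨hinv.ownq, hinv.ownUnique, hinv.cutUntouched, hinv.ownClean, hinv.ptrClean,
      ?_, ?_, hinv.activeInv, ?_, hinv.ptrBound⟩
    · intro z' h'
      rw [AugSt.mk_debt] at h'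
      cases h'
    · intro z' h'
      rw [AugSt.mk_exh] at h'
      injection h' with h'
      subst h'
      exact ⟨rfl, hoz, hzm, hclean, hzt⟩
    · intro w hw
      rcases hinv.cover w hw with h | h | h | h
      · exact Or.inl h
      · rw [hex0] at h; cases h
      · rw [hz] at h
        injection h with h
        subst h
        exact Or.inr (Or.inl rfl)
      · exact Or.inr (Or.inr (Or.inr h))
  | steal z i j q d hz hi hq hj hcut hij hmin hd =>
    exact steal_inv H hinv z i j q d hz hi hq hj hcut hij hmin hd

end AugHyp
namespace AugHyp

variable {E : Set (V × V)} {X Y X' W : Set V} {x : V} {a b : V → Dipath E}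

theorem exists_run (H : AugHyp E X Y X' W x a b) :
    ∃ r : ℕ → AugSt V, r 0 = augInit x ∧ (∀ m, AugInv a b X' x (r m)) ∧
      ∀ m, StepRel a b X' (r m) (r (m + 1)) := by
  choose g hg using (step_total (a := a) (b := b) (X' := X'))
  refine ⟨fun n => g^[n] (augInit x), by simp, ?_, ?_⟩
  · intro m
    induction m with
    | zero => simpa using augInit_inv a b X' x H.hxX'
    | succ m ih =>
      simp only [Function.iterate_succ_apply']
      exact H.step_inv (by simpa using ih) (hg _)
  · intro m
    simp only [Function.iterate_succ_apply']
    exact hg _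

section Run

variable {r : ℕ → AugSt V}

theorem run_touched_mono (hrI : ∀ m, AugInv a b X' x (r m))
    (hrS : ∀ m, StepRel a b X' (r m) (r (m + 1))) {w : V} {m m' : ℕ} (hle : m ≤ m')
    (ht : touched (r m) w) : touched (r m') w := by
  induction m' with
  | zero => have : m = 0 := by omega
            rw [this] at ht; exact ht
  | succ k ih =>
    rcases Nat.lt_or_ge m (k + 1) with h | h
    · exact (hrS k).touched_mono (x := x) (hrI k) (ih (by omega))
    · have : m = k + 1 := by omega
      rw [this] at ht; exact ht

theorem run_exh_forever (hrI : ∀ m, AugInv a b X' x (r m))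
    (hrS : ∀ m, StepRel a b X' (r m) (r (m + 1))) {z : V} {m : ℕ}
    (h : (r m).exh = some z) : ∀ m', m ≤ m' → r m' = r m := by
  intro m' hle
  induction m' with
  | zero => have : m = 0 := by omega
            rw [this]
  | succ k ih =>
    rcases Nat.lt_or_ge m (k + 1) with hlt | hge
    · have hk := ih (by omega)
      have : r (k + 1) = r k := (hrS k).exh_absorb (hrI k) (z := z) (by rw [hk]; exact h)
      rw [this, hk]
    · have : m = k + 1 := by omega
      rw [this]

theorem run_exh_uniq (hrI : ∀ m, AugInv a b X' x (r m))
    (hrS : ∀ m, StepRel a b X' (r m) (r (m + 1))) {z z' : V} {m m' : ℕ}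
    (h : (r m).exh = some z) (h' : (r m').exh = some z') : z = z' := by
  rcases Nat.le_total m m' with hle | hle
  · rw [run_exh_forever hrI hrS h m' hle] at h'
    rw [h] at h'
    injection h'
  · rw [run_exh_forever hrI hrS h' m hle] at h
    rw [h'] at h
    injection h.symm

theorem run_ptr_mono (hrI : ∀ m, AugInv a b X' x (r m))
    (hrS : ∀ m, StepRel a b X' (r m) (r (m + 1))) (w : V) {m m' : ℕ} (hle : m ≤ m') :
    (r m).ptr w ≤ (r m').ptr w := by
  induction m' with
  | zero => have : m = 0 := by omega
            rw [this]
  | succ k ih =>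
    rcases Nat.lt_or_ge m (k + 1) with hlt | hge
    · exact le_trans (ih (by omega)) ((hrS k).ptr_mono (hrI k) w)
    · have : m = k + 1 := by omega
      rw [this]

/-- The pointer of `z` eventually stabilizes. -/
theorem ptr_stab (hrI : ∀ m, AugInv a b X' x (r m))
    (hrS : ∀ m, StepRel a b X' (r m) (r (m + 1))) (z : V) :
    ∃ N, ∀ m, N ≤ m → (r m).ptr z = (r N).ptr z := by
  have hbdd : BddAbove (Set.range fun m => (r m).ptr z) := by
    refine ⟨(a z).verts.length, ?_⟩
    rintro v ⟨m, rfl⟩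
    exact (hrI m).ptrBound z
  have hne : (Set.range fun m => (r m).ptr z).Nonempty := ⟨(r 0).ptr z, 0, rfl⟩
  obtain ⟨N, hN⟩ := Nat.sSup_mem hne hbdd
  refine ⟨N, fun m hm => ?_⟩
  have h1 : (r N).ptr z ≤ (r m).ptr z := run_ptr_mono hrI hrS z hm
  have h2 : (r m).ptr z ≤ sSup (Set.range fun m => (r m).ptr z) :=
    le_csSup hbdd ⟨m, rfl⟩
  have hN' : (r N).ptr z = sSup (Set.range fun m => (r m).ptr z) := hN
  omega

/-- If the process never halts, the ownership state of each vertex stabilizes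
and it is eventually never in debt. -/
theorem own_stab (hrI : ∀ m, AugInv a b X' x (r m))
    (hrS : ∀ m, StepRel a b X' (r m) (r (m + 1)))
    (hns : ∀ m, (r m).debt ≠ none) (z : V) :
    ∃ N, ∀ m, N ≤ m → (r m).own z = (r N).own z ∧ (r m).debt ≠ some z := by
  have hexh0 : ∀ m, (r m).exh = none := by
    intro m
    cases he : (r m).exh with
    | none => rfl
    | some w => exact absurd ((hrI m).exhInv w he).1 (hns m)
  obtain ⟨N, hN⟩ := ptr_stab hrI hrS z
  have hdebt : ∀ m, N ≤ m → (r m).debt ≠ some z := by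
    intro m hm hd
    have hstep := hrS m
    revert hstep
    generalize hEq : r (m + 1) = σ2
    intro hstep
    cases hstep with
    | idle h => exact hns m h
    | exhaust z' h hclean =>
      have : (r (m + 1)).exh = some z' := by rw [hEq]
      rw [hexh0 (m + 1)] at this
      cases this
    | steal z' i j q d h hi hq hj hcut hij hmin hd' =>
      have hzz : z = z' := by
        rw [hd] at h
        injection h with hh
      subst hzz
      have hple : (r m).ptr z ≤ i := by
        by_contra hlt
        exact (hrI m).ptrClean z ((hrI m).debtInv z hd).1 i (by omega) hi
          (hij ▸ mem_hitSet_of hq hj hcut)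
      have hptr1 : (r (m + 1)).ptr z = i + 1 := by
        rw [hEq]
        simp only [AugSt.mk_ptr, Function.update_self]
      have e1 := hN m hm
      have e2 := hN (m + 1) (by omega)
      omega
  have hown : ∀ m, N ≤ m → (r m).own z = (r N).own z := by
    intro m
    induction m with
    | zero =>
      intro hm
      have : N = 0 := by omega
      rw [this]
    | succ k ih =>
      intro hm
      rcases Nat.lt_or_ge N (k + 1) with hlt | hge
      · have hk : (r k).own z = (r N).own z := ih (by omega)
        by_cases hch : (r (k + 1)).own z = (r k).own z
        · rw [hch, hk]
        · exfalso
          rcases (hrS k).own_change (hrI k) z hch with ⟨hdk, i, j, q, ho, hle, hpe⟩ | ⟨-, hdk⟩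
          · exact hdebt k (by omega) hdk
          · exact hdebt (k + 1) (by omega) hdk
      · have : N = k + 1 := by omega
        rw [this]
  exact ⟨N, fun m hm => ⟨hown m hm, hdebt m hm⟩⟩

end Run

end AugHyp
namespace AugHyp

variable {E : Set (V × V)} {X Y X' W : Set V} {x : V} {a b : V → Dipath E}

theorem build (H : AugHyp E X Y X' W x a b) (r : ℕ → AugSt V)
    (hrI : ∀ m, AugInv a b X' x (r m))
    (hrS : ∀ m, StepRel a b X' (r m) (r (m + 1)))
    (N : V → ℕ)
    (hstab : ∀ z m, N z ≤ m → (r m).own z = (r (N z)).own z)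
    (htri : ∀ z ∈ insert x X', (r (N z)).own z ≠ none ∨ (∃ m, (r m).exh = some z) ∨
      (z ∈ X' ∧ ∀ m, ¬ touched (r m) z)) :
    ∃ y ∈ Y, Joinable E (insert x X') (insert y W) := by
  classical
  set fp : V → Dipath E := fun z =>
    ((r (N z)).own z).elim
      (if ∃ m, (r m).exh = some z then a z else b z)
      (fun t => (a z).splice (b t.2.2) t.1 t.2.1)
    with hfp
  -- the new target vertex
  obtain ⟨y, hyY, hy⟩ : ∃ y, y ∈ Y ∧ ∀ z m, (r m).exh = some z → (a z).last = y := by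
    by_cases hE : ∃ zm : V × ℕ, (r zm.2).exh = some zm.1
    · obtain ⟨⟨z₀, m₀⟩, h₀⟩ := hE
      refine ⟨(a z₀).last, H.alast z₀ (H.insert_sub ((hrI m₀).exhInv z₀ h₀).2.2.1), ?_⟩
      intro z m hm
      rw [run_exh_uniq hrI hrS hm h₀]
    · exact ⟨(a x).last, H.alast x H.hxX, fun z m hm => absurd ⟨(z, m), hm⟩ hE⟩
  -- case S: data
  have hS : ∀ z i j q, (r (N z)).own z = some (i, j, q) →
      ∃ (hi : i < (a z).verts.length) (hj : j < (b q).verts.length),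
        q ∈ X' ∧ (a z).verts[i] = (b q).verts[j] ∧
        (∀ v ∈ (a z).verts.take (i + 1), v ∉ (b q).verts.drop (j + 1)) ∧
        fp z = (a z).splice (b q) i j := by
    intro z i j q hown
    obtain ⟨hq, hzm, hi, hj, hj1, hij, hcut, hptr⟩ := (hrI (N z)).ownq z i j q hown
    refine ⟨hi, hj, hq, hij, ?_, ?_⟩
    · intro v hvt hvd
      obtain ⟨k, hk, hkv⟩ := List.mem_take_iff_getElem.mp hvt
      obtain ⟨t, ht, htv⟩ := List.mem_drop_iff_getElem.mp hvd
      have hklen : k < (a z).verts.length := lt_of_lt_of_le hk (min_le_right _ _)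
      have hki : k < i + 1 := lt_of_lt_of_le hk (min_le_left _ _)
      have hvhit : v ∈ hitSet b X' (r (N z)) := by
        rw [← htv]
        exact mem_hitSet_of hq (by omega) (by omega)
      rcases Nat.lt_or_ge k i with hlt | hge
      · exact (hrI (N z)).ownClean z i j q hown k hlt hklen (by rw [hkv]; exact hvhit)
      · have hkeq : k = i := by omega
        subst hkeq
        have h1 : v = (b q).verts[j] := by rw [← hkv, hij]
        have hlt2 : j + 1 + t < (b q).verts.length := by omega
        have h3 : (b q).verts[j]'hj = (b q).verts[j + 1 + t]'hlt2 := by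
          rw [← h1, ← htv]
        have h2 : j = j + 1 + t := (b q).nodup.getElem_inj_iff.mp h3
        omega
    · rw [hfp]
      simp only [hown, Option.elim]
  -- case U and E: fp values
  have hU : ∀ z, z ∈ X' → (∀ m, ¬ touched (r m) z) → fp z = b z := by
    intro z hz hnt
    have hown : (r (N z)).own z = none := by
      cases ho : (r (N z)).own z with
      | none => rfl
      | some t =>
        rcases (hrI (N z)).activeInv z (by rw [ho]; simp) with h | h
        · exact absurd (h ▸ hz) H.hxX'
        · exact absurd h (hnt (N z))
    have hnE : ¬ ∃ m, (r m).exh = some z := by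
      rintro ⟨m, hm⟩
      rcases ((hrI m).exhInv z hm).2.2.2.2 with h | h
      · exact absurd (h ▸ hz) H.hxX'
      · exact absurd h (hnt m)
    rw [hfp]
    simp only [hown, Option.elim]
    rw [if_neg hnE]
  have hEc : ∀ z m, (r m).exh = some z → fp z = a z ∧
      ∀ m', m ≤ m' → (r m').exh = some z := by
    intro z m hm
    have habs : ∀ m', m ≤ m' → (r m').exh = some z := by
      intro m' hle
      rw [run_exh_forever hrI hrS hm m' hle]
      exact hm
    have hown : (r (N z)).own z = none := by
      have h1 : (r (max (N z) m)).own z = (r (N z)).own z :=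
        hstab z _ (le_max_left _ _)
      have h2 : (r (max (N z) m)).exh = some z := habs _ (le_max_right _ _)
      have h3 := ((hrI (max (N z) m)).exhInv z h2).2.1
      rw [h1] at h3
      exact h3
    refine ⟨?_, habs⟩
    rw [hfp]
    simp only [hown, Option.elim]
    rw [if_pos ⟨m, hm⟩]
  -- starts
  have hstart : ∀ z ∈ insert x X', (fp z).start = z := by
    intro z hz
    rcases htri z hz with ho | ⟨m, hm⟩ | ⟨hz', hnt⟩
    · cases hov : (r (N z)).own z with
      | none => exact absurd hov ho
      | some t =>
        obtain ⟨hi, hj, hq, hij, hdisj, hfpz⟩ := hS z t.1 t.2.1 t.2.2 hov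
        rw [hfpz, Dipath.splice_start]
        exact H.astart z (H.insert_sub hz)
    · rw [(hEc z m hm).1]
      exact H.astart z (H.insert_sub hz)
    · rw [hU z hz' hnt]
      exact H.bstart z hz'
  -- terminal vertices
  have hlast : ∀ z ∈ insert x X', (fp z).last ∈ insert y W := by
    intro z hz
    rcases htri z hz with ho | ⟨m, hm⟩ | ⟨hz', hnt⟩
    · cases hov : (r (N z)).own z with
      | none => exact absurd hov ho
      | some t =>
        obtain ⟨hi, hj, hq, hij, hdisj, hfpz⟩ := hS z t.1 t.2.1 t.2.2 hov
        rw [hfpz, Dipath.splice_last _ _ hi hj hij hdisj]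
        exact Set.mem_insert_of_mem _ (H.blast _ hq)
    · rw [(hEc z m hm).1, hy z m hm]
      exact Set.mem_insert _ _
    · rw [hU z hz' hnt]
      exact Set.mem_insert_of_mem _ (H.blast _ hz')
  -- pairwise disjointness
  -- membership facts for spliced paths
  have hSfacts : ∀ z i j q, (r (N z)).own z = some (i, j, q) → ∀ v, v ∈ (fp z).verts →
      ∀ m, N z ≤ m →
      (v ∈ (a z).verts ∧ (v ∉ hitSet b X' (r m) ∨ v ∈ (b q).verts)) ∨
        (v ∈ (b q).verts ∧ v ∈ hitSet b X' (r m)) := by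
    intro z i j q hov v hv m hm
    obtain ⟨hi, hj, hqX, hij, hdisj, hfpz⟩ := hS z i j q hov
    rw [hfpz, Dipath.splice_mem _ _ hi hj hij hdisj] at hv
    have hownm : (r m).own z = some (i, j, q) := by
      rw [hstab z m hm]; exact hov
    obtain ⟨-, -, -, -, -, -, hcutm, -⟩ := (hrI m).ownq z i j q hownm
    rcases hv with hvt | hvd
    · left
      refine ⟨(List.take_sublist _ _).mem hvt, ?_⟩
      obtain ⟨k, hk, hkv⟩ := List.mem_take_iff_getElem.mp hvt
      have hklen : k < (a z).verts.length := lt_of_lt_of_le hk (min_le_right _ _)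
      have hki : k ≤ i := by
        have := lt_of_lt_of_le hk (min_le_left _ _); omega
      rcases Nat.lt_or_ge k i with hlt | hge
      · left
        intro hmem
        exact (hrI m).ownClean z i j q hownm k hlt hklen (by rw [hkv]; exact hmem)
      · right
        have hke : k = i := by omega
        subst hke
        rw [← hkv, hij]
        exact List.getElem_mem _
    · right
      refine ⟨(List.drop_sublist _ _).mem hvd, ?_⟩
      obtain ⟨t, ht, htv⟩ := List.mem_drop_iff_getElem.mp hvd
      rw [← htv]
      exact mem_hitSet_of hqX (by omega) (by rw [hcutm]; omega)
  have hpair : ∀ z ∈ insert x X', ∀ z' ∈ insert x X', z ≠ z' →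
      ∀ v, v ∈ (fp z).verts → v ∈ (fp z').verts → False := by
    -- core: S vs S
    have coreSS : ∀ z₁ ∈ insert x X', ∀ z₂ ∈ insert x X', z₁ ≠ z₂ →
        ∀ i j q i' j' q', (r (N z₁)).own z₁ = some (i, j, q) →
        (r (N z₂)).own z₂ = some (i', j', q') →
        ∀ v, v ∈ (fp z₁).verts → v ∈ (fp z₂).verts → False := by
      intro z₁ hm₁ z₂ hm₂ hne i j q i' j' q' hov1 hov2 v hv1 hv2
      set m := max (N z₁) (N z₂) with hmdef
      have hown1m : (r m).own z₁ = some (i, j, q) := by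
        rw [hstab z₁ m (le_max_left _ _)]; exact hov1
      have hown2m : (r m).own z₂ = some (i', j', q') := by
        rw [hstab z₂ m (le_max_right _ _)]; exact hov2
      have hq1 : q ∈ X' := ((hrI m).ownq z₁ i j q hown1m).1
      have hq2 : q' ∈ X' := ((hrI m).ownq z₂ i' j' q' hown2m).1
      have hqq : q ≠ q' := by
        rintro rfl
        exact hne ((hrI m).ownUnique z₁ z₂ i j i' j' q hown1m hown2m)
      rcases hSfacts z₁ i j q hov1 v hv1 m (le_max_left _ _) with
        ⟨ha1, hc1⟩ | ⟨hb1, hh1⟩ <;>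
        rcases hSfacts z₂ i' j' q' hov2 v hv2 m (le_max_right _ _) with
          ⟨ha2, hc2⟩ | ⟨hb2, hh2⟩
      · exact H.adisj z₁ (H.insert_sub hm₁) z₂ (H.insert_sub hm₂) hne v ha1 ha2
      · rcases hc1 with hcl | hjb
        · exact hcl hh2
        · exact H.bdisj q hq1 q' hq2 hqq v hjb hb2
      · rcases hc2 with hcl | hjb
        · exact hcl hh1
        · exact H.bdisj q' hq2 q hq1 (Ne.symm hqq) v hjb hb1
      · exact H.bdisj q hq1 q' hq2 hqq v hb1 hb2
    -- core: S vs E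
    have coreSE : ∀ z₁ ∈ insert x X', ∀ z₂, z₁ ≠ z₂ →
        ∀ i j q, (r (N z₁)).own z₁ = some (i, j, q) →
        ∀ m₂, (r m₂).exh = some z₂ →
        ∀ v, v ∈ (fp z₁).verts → v ∈ (fp z₂).verts → False := by
      intro z₁ hm₁ z₂ hne i j q hov1 m₂ hexh2 v hv1 hv2
      set m := max (N z₁) m₂ with hmdef
      have hexh2m : (r m).exh = some z₂ := (hEc z₂ m₂ hexh2).2 m (le_max_right _ _)
      obtain ⟨-, -, hz₂m, hclean, -⟩ := (hrI m).exhInv z₂ hexh2m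
      rw [(hEc z₂ m₂ hexh2).1] at hv2
      obtain ⟨k, hk, hkv⟩ := List.mem_iff_getElem.mp hv2
      have hvnot : v ∉ hitSet b X' (r m) := by
        rw [← hkv]; exact hclean k hk
      rcases hSfacts z₁ i j q hov1 v hv1 m (le_max_left _ _) with ⟨ha1, -⟩ | ⟨-, hh1⟩
      · exact H.adisj z₁ (H.insert_sub hm₁) z₂ (H.insert_sub hz₂m) hne v ha1 hv2
      · exact hvnot hh1
    -- core: S vs U
    have coreSU : ∀ z₁ ∈ insert x X', ∀ z₂, z₁ ≠ z₂ →
        ∀ i j q, (r (N z₁)).own z₁ = some (i, j, q) →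
        z₂ ∈ X' → (∀ m, ¬ touched (r m) z₂) →
        ∀ v, v ∈ (fp z₁).verts → v ∈ (fp z₂).verts → False := by
      intro z₁ hm₁ z₂ hne i j q hov1 hz₂X hnt2 v hv1 hv2
      set m := N z₁ with hmdef
      rw [hU z₂ hz₂X hnt2] at hv2
      have hcut0 : (r m).cut z₂ = 0 := (hrI m).cutUntouched z₂ (hnt2 m)
      obtain ⟨k, hk, hkv⟩ := List.mem_iff_getElem.mp hv2
      have hhit2 : v ∈ hitSet b X' (r m) := by
        rw [← hkv]
        exact mem_hitSet_of hz₂X hk (by rw [hcut0]; omega)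
      have hown1m : (r m).own z₁ = some (i, j, q) := by
        rw [hstab z₁ m le_rfl]; exact hov1
      have hq1 : q ∈ X' := ((hrI m).ownq z₁ i j q hown1m).1
      have hq2ne : q ≠ z₂ := by
        rintro rfl
        exact hnt2 m ⟨z₁, i, j, hown1m⟩
      rcases hSfacts z₁ i j q hov1 v hv1 m le_rfl with ⟨-, hc1⟩ | ⟨hb1, -⟩
      · rcases hc1 with hcl | hjb
        · exact hcl hhit2
        · exact H.bdisj q hq1 z₂ hz₂X hq2ne v hjb hv2
      · exact H.bdisj q hq1 z₂ hz₂X hq2ne v hb1 hv2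
    -- core: E vs U
    have coreEU : ∀ z₁ z₂, ∀ m₁, (r m₁).exh = some z₁ →
        z₂ ∈ X' → (∀ m, ¬ touched (r m) z₂) →
        ∀ v, v ∈ (fp z₁).verts → v ∈ (fp z₂).verts → False := by
      intro z₁ z₂ m₁ hexh1 hz₂X hnt2 v hv1 hv2
      obtain ⟨-, -, -, hclean, -⟩ := (hrI m₁).exhInv z₁ hexh1
      rw [(hEc z₁ m₁ hexh1).1] at hv1
      rw [hU z₂ hz₂X hnt2] at hv2
      obtain ⟨k, hk, hkv⟩ := List.mem_iff_getElem.mp hv1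
      have hcut0 : (r m₁).cut z₂ = 0 := (hrI m₁).cutUntouched z₂ (hnt2 m₁)
      obtain ⟨k', hk', hkv'⟩ := List.mem_iff_getElem.mp hv2
      refine hclean k hk ?_
      rw [hkv, ← hkv']
      exact mem_hitSet_of hz₂X hk' (by rw [hcut0]; omega)
    intro z hz z' hz' hne v hv hv'
    rcases htri z hz with ho1 | ⟨m1, hm1⟩ | ⟨hzX1, hnt1⟩
    · cases hov1 : (r (N z)).own z with
      | none => exact absurd hov1 ho1
      | some t =>
        obtain ⟨i, j, q⟩ := t
        rcases htri z' hz' with ho2 | ⟨m2, hm2⟩ | ⟨hzX2, hnt2⟩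
        · cases hov2 : (r (N z')).own z' with
          | none => exact absurd hov2 ho2
          | some t' =>
            obtain ⟨i', j', q'⟩ := t'
            exact coreSS z hz z' hz' hne i j q i' j' q' hov1 hov2 v hv hv'
        · exact coreSE z hz z' hne i j q hov1 m2 hm2 v hv hv'
        · exact coreSU z hz z' hne i j q hov1 hzX2 hnt2 v hv hv'
    · rcases htri z' hz' with ho2 | ⟨m2, hm2⟩ | ⟨hzX2, hnt2⟩
      · cases hov2 : (r (N z')).own z' with
        | none => exact absurd hov2 ho2
        | some t' =>
          obtain ⟨i', j', q'⟩ := t'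
          exact coreSE z' hz' z (Ne.symm hne) i' j' q' hov2 m1 hm1 v hv' hv
      · exact hne (run_exh_uniq hrI hrS hm1 hm2)
      · exact coreEU z z' m1 hm1 hzX2 hnt2 v hv hv'
    · rcases htri z' hz' with ho2 | ⟨m2, hm2⟩ | ⟨hzX2, hnt2⟩
      · cases hov2 : (r (N z')).own z' with
        | none => exact absurd hov2 ho2
        | some t' =>
          obtain ⟨i', j', q'⟩ := t'
          exact coreSU z' hz' z (Ne.symm hne) i' j' q' hov2 hzX1 hnt1 v hv' hv
      · exact coreEU z' z m2 hm2 hzX1 hnt1 v hv' hv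
      · rw [hU z hzX1 hnt1] at hv
        rw [hU z' hzX2 hnt2] at hv'
        exact H.bdisj z hzX1 z' hzX2 hne v hv hv'
  -- assemble the system
  refine ⟨y, hyY, fp '' (insert x X'), ⟨?_, ?_⟩, ?_⟩
  · rintro p ⟨z, hz, rfl⟩
    refine ⟨by rw [hstart z hz]; exact hz, hlast z hz, ?_⟩
    intro w hw hmem
    have hXY' : w ∉ X ∪ Y := Dipath.internal_not_mem H.hX H.hY (fp z) hw
    rcases hmem with hw1 | hw1
    · exact hXY' (Or.inl (H.insert_sub hw1))
    · rcases hw1 with rfl | hw2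
      · exact hXY' (Or.inr hyY)
      · exact hXY' (Or.inr (H.hWY hw2))
  · rintro p ⟨z, hz, rfl⟩ p' ⟨z', hz', rfl⟩ hne
    have hzz : z ≠ z' := by
      rintro rfl
      exact hne rfl
    exact Set.disjoint_left.mpr fun v hv hv' => hpair z hz z' hz' hzz v hv hv'
  · ext v
    constructor
    · rintro ⟨p, ⟨z, hz, rfl⟩, rfl⟩
      rw [hstart z hz]
      exact hz
    · intro hv
      exact ⟨fp v, ⟨v, hv, rfl⟩, hstart v hv⟩

end AugHyp
namespace AugHyp

variable {E : Set (V × V)} {X Y X' W : Set V} {x : V} {a b : V → Dipath E}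

theorem aug (H : AugHyp E X Y X' W x a b) :
    ∃ y ∈ Y, Joinable E (insert x X') (insert y W) := by
  obtain ⟨r, hr0, hrI, hrS⟩ := exists_run H
  by_cases hns : ∀ m, (r m).debt ≠ none
  · -- the process runs forever
    choose N hN using own_stab hrI hrS hns
    refine build H r hrI hrS N (fun z m hm => (hN z m hm).1) ?_
    intro z hz
    by_cases ho : (r (N z)).own z = none
    · right
      by_cases hEx : ∃ m, (r m).exh = some z
      · exact Or.inl hEx
      · right
        have huntm : ∀ m, N z ≤ m → z ∈ X' ∧ ¬ touched (r m) z := by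
          intro m hm
          rcases (hrI m).cover z hz with h | h | h | h
          · rw [(hN z m hm).1, ho] at h
            exact absurd rfl h
          · exact absurd ⟨m, h⟩ hEx
          · exact absurd h (hN z m hm).2
          · exact h
        refine ⟨(huntm (N z) le_rfl).1, ?_⟩
        intro m ht
        exact (huntm (max m (N z)) (le_max_right _ _)).2
          (run_touched_mono hrI hrS (le_max_left _ _) ht)
    · exact Or.inl ho
  · -- the process halts
    push_neg at hns
    obtain ⟨m₀, hm₀⟩ := hns
    have hconst : ∀ m, m₀ ≤ m → r m = r m₀ := by
      intro m
      induction m with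
      | zero =>
        intro hm
        have : m₀ = 0 := by omega
        rw [this]
      | succ k ih =>
        intro hm
        rcases Nat.lt_or_ge m₀ (k + 1) with hlt | hge
        · have hk := ih (by omega)
          rw [(hrS k).idle_of_none (by rw [hk]; exact hm₀), hk]
        · have : m₀ = k + 1 := by omega
          rw [this]
    refine build H r hrI hrS (fun _ => m₀) ?_ ?_
    · intro z m hm
      rw [hconst m hm]
    · intro z hz
      rcases (hrI m₀).cover z hz with h | h | h | h
      · exact Or.inl h
      · exact Or.inr (Or.inl ⟨m₀, h⟩)
      · rw [hm₀] at h; cases h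
      · refine Or.inr (Or.inr ⟨h.1, ?_⟩)
        intro m ht
        rcases Nat.le_total m m₀ with hle | hle
        · exact h.2 (run_touched_mono hrI hrS hle ht)
        · rw [hconst m hle] at ht
          exact h.2 ht

end AugHyp

section Outer

variable {E : Set (V × V)}

theorem Joinable.exists_fam {O T : Set V} (h : Joinable E O T) :
    ∃ f : V → Dipath E, (∀ z ∈ O, (f z).start = z) ∧ (∀ z ∈ O, (f z).last ∈ T) ∧
      ∀ z ∈ O, ∀ z' ∈ O, z ≠ z' → ∀ v ∈ (f z).verts, v ∉ (f z').verts := by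
  classical
  obtain ⟨P, ⟨hP1, hP2⟩, hPinit⟩ := h
  set f : V → Dipath E := fun z =>
    if h : ∃ p ∈ P, p.start = z then h.choose
    else ⟨z, [], List.Chain.nil, by simp⟩
    with hfdef
  have hch : ∀ z ∈ O, ∃ p ∈ P, p.start = z := by
    intro z hz
    rw [← hPinit] at hz
    obtain ⟨p, hp, he⟩ := hz
    exact ⟨p, hp, he⟩
  have hfP : ∀ z ∈ O, f z ∈ P ∧ (f z).start = z := by
    intro z hz
    have hc := hch z hz
    rw [hfdef]
    simp only [dif_pos hc]
    exact ⟨hc.choose_spec.1, hc.choose_spec.2⟩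
  refine ⟨f, fun z hz => (hfP z hz).2, fun z hz => (hP1 _ (hfP z hz).1).2.1, ?_⟩
  intro z hz z' hz' hne v hv
  have hdne : f z ≠ f z' := by
    intro he
    rw [← (hfP z hz).2, ← (hfP z' hz').2, he] at hne
    exact hne rfl
  exact Set.disjoint_left.mp (hP2 (hfP z hz).1 (hfP z' hz').1 hdne) hv

theorem aug_main {X Y X' W : Set V} {x : V}
    (hX : ∀ e ∈ E, e.2 ∉ X) (hY : ∀ e ∈ E, e.1 ∉ Y)
    (hX'X : X' ⊆ X) (hWY : W ⊆ Y) (hxX : x ∈ X) (hxX' : x ∉ X')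
    (hXY : Joinable E X Y) (hjoin : Joinable E X' W) :
    ∃ y ∈ Y, Joinable E (insert x X') (insert y W) := by
  obtain ⟨a, ha1, ha2, ha3⟩ := hXY.exists_fam
  obtain ⟨b, hb1, hb2, hb3⟩ := hjoin.exists_fam
  exact AugHyp.aug ⟨hX, hY, hX'X, hWY, hxX, hxX', ha1, ha2, ha3, hb1, hb2, hb3⟩

theorem main_aux {X Y : Set V}
    (hX : ∀ e ∈ E, e.2 ∉ X) (hY : ∀ e ∈ E, e.1 ∉ Y) (hXY : Joinable E X Y) :
    ∀ n : ℕ, ∀ X₁ W₁ : Set V, X₁ ⊆ X → W₁ ⊆ Y → (X \ X₁).Finite → (X \ X₁).ncard ≤ n →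
      Joinable E X₁ W₁ →
      ∃ Y'', Y'' ⊆ Y ∧ Joinable E X Y'' ∧ (Y'' \ W₁).Finite ∧ (Y'' \ W₁).ncard ≤ n := by
  intro n
  induction n with
  | zero =>
    intro X₁ W₁ hX₁ hW₁ hfin hcard hj
    have hXX₁ : X = X₁ := by
      have hdiff : X \ X₁ = ∅ := by
        rw [← Set.ncard_eq_zero hfin]
        omega
      exact Set.Subset.antisymm (Set.diff_eq_empty.mp hdiff) hX₁
    exact ⟨W₁, hW₁, hXX₁ ▸ hj, by simp, by simp⟩
  | succ n ih =>
    intro X₁ W₁ hX₁ hW₁ hfin hcard hj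
    by_cases hempty : X \ X₁ = ∅
    · have hXX₁ : X = X₁ := Set.Subset.antisymm (Set.diff_eq_empty.mp hempty) hX₁
      exact ⟨W₁, hW₁, hXX₁ ▸ hj, by simp, by simp⟩
    · obtain ⟨x, hx⟩ := Set.nonempty_iff_ne_empty.mpr hempty
      have hxX : x ∈ X := hx.1
      have hxX₁ : x ∉ X₁ := hx.2
      obtain ⟨y, hyY, hj2⟩ := aug_main hX hY hX₁ hW₁ hxX hxX₁ hXY hj
      have h1 : X \ insert x X₁ = (X \ X₁) \ {x} := by
        ext v
        simp only [Set.mem_diff, Set.mem_insert_iff, Set.mem_singleton_iff]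
        tauto
      have hfin2 : (X \ insert x X₁).Finite := by
        rw [h1]
        exact hfin.subset Set.diff_subset
      have hcard2 : (X \ insert x X₁).ncard ≤ n := by
        rw [h1]
        have hlt := Set.ncard_diff_singleton_lt_of_mem hx hfin
        have hle := Set.ncard_le_ncard (Set.diff_subset (s := X \ X₁) (t := {x})) hfin
        omega
      obtain ⟨Y'', hY''Y, hjY'', hfinY, hcardY⟩ := ih (insert x X₁) (insert y W₁)
        (Set.insert_subset hxX hX₁) (Set.insert_subset hyY hW₁) hfin2 hcard2 hj2
      have hsub : Y'' \ W₁ ⊆ (Y'' \ insert y W₁) ∪ {y} := by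
        intro v hv
        by_cases hvy : v = y
        · exact Or.inr hvy
        · left
          refine ⟨hv.1, ?_⟩
          intro hvm
          rcases hvm with h | h
          · exact hvy h
          · exact hv.2 h
      have hfinU : ((Y'' \ insert y W₁) ∪ {y}).Finite :=
        hfinY.union (Set.finite_singleton y)
      refine ⟨Y'', hY''Y, hjY'', hfinU.subset hsub, ?_⟩
      calc (Y'' \ W₁).ncard ≤ ((Y'' \ insert y W₁) ∪ {y}).ncard :=
            Set.ncard_le_ncard hsub hfinU
        _ ≤ (Y'' \ insert y W₁).ncard + ({y} : Set V).ncard := Set.ncard_union_le _ _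
        _ ≤ n + 1 := by
            rw [Set.ncard_singleton]
            omega

end Outer

/-- If `X` is joinable to `Y` and `X' ⊆ X` (with `X \ X'` finite) is joinable to
`Y' ⊆ Y`, then `X` is joinable to some `Y'' ⊆ Y` with `|Y'' \ Y'| ≤ |X \ X'|`. -/
theorem stmt5 {V : Type u} (E : Set (V × V)) (X Y : Set V)
    (hX : ∀ e ∈ E, e.2 ∉ X) (hY : ∀ e ∈ E, e.1 ∉ Y)
    (hXY : Joinable E X Y) (X' Y' : Set V) (hX' : X' ⊆ X) (hY' : Y' ⊆ Y)
    (hfin : (X \ X').Finite) (hjoin : Joinable E X' Y') :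
    ∃ Y'' ⊆ Y, Joinable E X Y'' ∧ (Y'' \ Y').Finite ∧
      (Y'' \ Y').ncard ≤ (X \ X').ncard := by
  obtain ⟨Y'', h1, h2, h3, h4⟩ :=
    main_aux hX hY hXY ((X \ X').ncard) X' Y' hX' hY' hfin le_rfl hjoin
  exact ⟨Y'', h1, h2, h3, h4⟩
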